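/- Let S be a causal system (i.e., for every admissible pair of cumulative arrival function A and cumulative departure function D, A ≥ D pointwise and D(t) depends only on A(s) for s ≤ t), whose departure functions are continuous. Suppose each flow f in a finite set F has token-bucket arrival curve γ_{r_f,b_f} (with γ_{r,b}(t)=rt+b for t>0 and 0 at t=0), and that these are the only constraints on the arrivals, and suppose B is a backlog bound: A(t) − D(t) ≤ B for all admissible (A,D) and all t, where A = Σ_f A_f and D = Σ_f D_f. Then the aggregate departure D is constrained by the token-bucket arrival curve γ_{r,B} with r = Σ_{f∈F} r_f; that is, D(t) − D(s) ≤ B + r(t−s) for all s ≤ t. -/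

import Mathlib

open scoped NNReal

/-- Token-bucket arrival curve: `γ_{r,b}(t) = r t + b` for `t > 0`, and `0` at `t = 0`. -/
noncomputable def tokenBucket (r b : ℝ) (t : ℝ≥0) : ℝ :=
  if t = 0 then 0 else r * t + b

/-- A cumulative function: non-decreasing, non-negative, starting at 0. -/
def Cumulative (A : ℝ≥0 → ℝ) : Prop :=
  Monotone A ∧ A 0 = 0 ∧ ∀ t, 0 ≤ A t

/-- `A` is constrained by arrival curve `α`. -/
def Constrained (A : ℝ≥0 → ℝ) (α : ℝ≥0 → ℝ) : Prop :=
  ∀ s t : ℝ≥0, s ≤ t → A t - A s ≤ α (t - s)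

/-- Lemma 1 of the paper: under causality (A1), continuity of departures (A2),
token-bucket arrival constraints being the only constraints (A3), and an aggregate
backlog bound `B` (A4), the aggregate departure is constrained by `γ_{r,B}` with
`r = Σ_{f∈F} r_f`. -/
theorem aggregate_departure_token_bucket
    {ι : Type*} (F : Finset ι) (r b : ι → ℝ)
    (hr : ∀ f, 0 ≤ r f) (hb : ∀ f, 0 ≤ b f)
    (S : Set ((ι → ℝ≥0 → ℝ) × (ι → ℝ≥0 → ℝ)))
    (B : ℝ)
    (hcum : ∀ p ∈ S, (∀ f, Cumulative (p.1 f)) ∧ (∀ f, Cumulative (p.2 f)))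
    -- (A1) causality: D ≤ A …
    (hDleA : ∀ p ∈ S, ∀ f ∈ F, ∀ t, p.2 f t ≤ p.1 f t)
    -- … and D(t) depends only on A(s) for s ≤ t
    (hcausal : ∀ p ∈ S, ∀ q ∈ S, ∀ t : ℝ≥0,
      (∀ s ≤ t, ∀ f ∈ F, p.1 f s = q.1 f s) → ∀ f ∈ F, p.2 f t = q.2 f t)
    -- (A2) continuity of the aggregate departure
    (hcont : ∀ p ∈ S, Continuous fun t => ∑ f ∈ F, p.2 f t)
    -- (A3) every admissible arrival is token-bucket constrained …
    (harr : ∀ p ∈ S, ∀ f ∈ F, Constrained (p.1 f) (tokenBucket (r f) (b f)))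
    -- … and these are the only constraints on arrivals
    (hfree : ∀ A : ι → ℝ≥0 → ℝ, (∀ f, Cumulative (A f)) →
      (∀ f ∈ F, Constrained (A f) (tokenBucket (r f) (b f))) →
      ∃ D, (A, D) ∈ S)
    -- (A4) backlog bound for the aggregate
    (hB : ∀ p ∈ S, ∀ t, (∑ f ∈ F, p.1 f t) - (∑ f ∈ F, p.2 f t) ≤ B) :
    ∀ p ∈ S, Constrained (fun t => ∑ f ∈ F, p.2 f t)
      (tokenBucket (∑ f ∈ F, r f) B) := by
  intro p hp s t hst
  dsimp only
  rcases eq_or_lt_of_le hst with rfl | hlt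
  · simp [tokenBucket]
  classical
  have hAcum : ∀ f, Cumulative (p.1 f) := (hcum p hp).1
  have hAconstr : ∀ f ∈ F, Constrained (p.1 f) (tokenBucket (r f) (b f)) := harr p hp
  have htb_le : ∀ f, ∀ x : ℝ≥0, tokenBucket (r f) (b f) x ≤ r f * x + b f := by
    intro f x
    unfold tokenBucket
    split
    · have h1 := hr f; have h2 := hb f
      positivity
    · exact le_rfl
  have hsplit : ∀ u v w : ℝ≥0, u ≤ v → v ≤ w →
      ((v - u : ℝ≥0) : ℝ) + ((w - v : ℝ≥0) : ℝ) = ((w - u : ℝ≥0) : ℝ) := by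
    intro u v w h1 h2
    have h3 : (v - u) + (w - v) = w - u := by
      rw [add_comm]; exact tsub_add_tsub_cancel h2 h1
    exact_mod_cast h3
  set g : ι → ℝ≥0 → ℝ := fun f v => p.1 f v + r f * ((s - v : ℝ≥0) : ℝ) + b f with hgdef
  have hlb : ∀ f ∈ F, ∀ v ∈ Set.Iic s, p.1 f s ≤ g f v := by
    intro f hf v hv
    have h1 := hAconstr f hf v s hv
    have h2 := htb_le f (s - v)
    simp only [hgdef]
    linarith
  set c : ι → ℝ := fun f => sInf (g f '' Set.Iic s) with hcdef
  have hne : ∀ f, (g f '' Set.Iic s).Nonempty := fun f => ⟨g f s, s, Set.mem_Iic.mpr le_rfl, rfl⟩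
  have hbdd : ∀ f ∈ F, BddBelow (g f '' Set.Iic s) := by
    intro f hf
    exact ⟨p.1 f s, by rintro x ⟨v, hv, rfl⟩; exact hlb f hf v hv⟩
  have hc_le : ∀ f ∈ F, ∀ v ∈ Set.Iic s, c f ≤ g f v := by
    intro f hf v hv
    exact csInf_le (hbdd f hf) ⟨v, hv, rfl⟩
  have hc_ge : ∀ f ∈ F, p.1 f s ≤ c f := by
    intro f hf
    exact le_csInf (hne f) (by rintro x ⟨v, hv, rfl⟩; exact hlb f hf v hv)
  set A' : ι → ℝ≥0 → ℝ := fun f w =>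
    if f ∈ F then (if w ≤ s then p.1 f w else c f + r f * ((w - s : ℝ≥0) : ℝ))
    else p.1 f w with hA'def
  have hA'le : ∀ f, ∀ w : ℝ≥0, w ≤ s → A' f w = p.1 f w := by
    intro f w hw
    simp [hA'def, hw]
  have hA'gt : ∀ f ∈ F, ∀ w : ℝ≥0, s < w → A' f w = c f + r f * ((w - s : ℝ≥0) : ℝ) := by
    intro f hf w hw
    simp [hA'def, hf, not_le.mpr hw]
  have hA'not : ∀ f, f ∉ F → A' f = p.1 f := by
    intro f hf
    funext w
    simp [hA'def, hf]
  -- A' is cumulative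
  have hA'cum : ∀ f, Cumulative (A' f) := by
    intro f
    by_cases hf : f ∈ F
    · refine ⟨?_, ?_, ?_⟩
      · intro w1 w2 h12
        by_cases h2 : w2 ≤ s
        · rw [hA'le f w1 (h12.trans h2), hA'le f w2 h2]
          exact (hAcum f).1 h12
        · push_neg at h2
          rw [hA'gt f hf w2 h2]
          by_cases h1 : w1 ≤ s
          · rw [hA'le f w1 h1]
            have := (hAcum f).1 h1
            have := hc_ge f hf
            have : (0:ℝ) ≤ r f * ((w2 - s : ℝ≥0) : ℝ) :=
              mul_nonneg (hr f) (NNReal.coe_nonneg _)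
            linarith [(hAcum f).1 h1, hc_ge f hf]
          · push_neg at h1
            rw [hA'gt f hf w1 h1]
            have hmono : ((w1 - s : ℝ≥0) : ℝ) ≤ ((w2 - s : ℝ≥0) : ℝ) := by
              exact_mod_cast tsub_le_tsub_right h12 s
            have := hr f
            nlinarith
      · rw [hA'le f 0 zero_le]; exact (hAcum f).2.1
      · intro w
        by_cases h1 : w ≤ s
        · rw [hA'le f w h1]; exact (hAcum f).2.2 w
        · push_neg at h1
          rw [hA'gt f hf w h1]
          have h2 := hc_ge f hf
          have h3 := (hAcum f).2.2 s
          have : (0:ℝ) ≤ r f * ((w - s : ℝ≥0) : ℝ) :=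
            mul_nonneg (hr f) (NNReal.coe_nonneg _)
          linarith
    · rw [hA'not f hf]; exact hAcum f
  -- A' is constrained
  have hA'constr : ∀ f ∈ F, Constrained (A' f) (tokenBucket (r f) (b f)) := by
    intro f hf v w hvw
    by_cases h2 : w ≤ s
    · rw [hA'le f v (hvw.trans h2), hA'le f w h2]
      exact hAconstr f hf v w hvw
    · push_neg at h2
      rw [hA'gt f hf w h2]
      by_cases h1 : v ≤ s
      · rw [hA'le f v h1]
        have hwv : w - v ≠ 0 := fun h =>
          absurd (tsub_eq_zero_iff_le.mp h) (not_le.mpr (lt_of_le_of_lt h1 h2))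
        rw [tokenBucket, if_neg hwv]
        have hkey := hc_le f hf v h1
        simp only [hgdef] at hkey
        have hsp : ((s - v : ℝ≥0) : ℝ) + ((w - s : ℝ≥0) : ℝ) = ((w - v : ℝ≥0) : ℝ) :=
          hsplit v s w h1 h2.le
        have : r f * ((w - v : ℝ≥0) : ℝ) = r f * ((s - v : ℝ≥0) : ℝ) + r f * ((w - s : ℝ≥0) : ℝ) := by
          rw [← hsp, mul_add]
        linarith
      · push_neg at h1
        rw [hA'gt f hf v h1]
        rcases eq_or_lt_of_le hvw with rfl | hvw'
        · simp [tokenBucket]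
        · have hwv : w - v ≠ 0 := fun h =>
            absurd (tsub_eq_zero_iff_le.mp h) (not_le.mpr hvw')
          rw [tokenBucket, if_neg hwv]
          have hsp : ((v - s : ℝ≥0) : ℝ) + ((w - v : ℝ≥0) : ℝ) = ((w - s : ℝ≥0) : ℝ) :=
            hsplit s v w h1.le hvw
          have hrf := hr f
          have hbf := hb f
          nlinarith
  -- get the modified admissible pair
  obtain ⟨D', hq⟩ := hfree A' hA'cum hA'constr
  -- departures agree at time s
  have hDs : ∀ f ∈ F, p.2 f s = D' f s := by
    refine hcausal p hp (A', D') hq s ?_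
    intro u hu f hf
    exact (hA'le f u hu).symm
  -- key inequality: ∑ c f ≤ ∑ D f s + B
  have hkey : (∑ f ∈ F, c f) ≤ (∑ f ∈ F, p.2 f s) + B := by
    refine le_of_forall_pos_le_add ?_
    intro ε hε
    have hcont' : ContinuousAt (fun w => ∑ f ∈ F, D' f w) s := (hcont (A', D') hq).continuousAt
    rw [Metric.continuousAt_iff] at hcont'
    obtain ⟨δ, hδ, hball⟩ := hcont' ε hε
    set δ' : ℝ≥0 := ⟨δ / 2, by positivity⟩ with hδ'def
    have hδ'pos : 0 < δ' := by
      rw [← NNReal.coe_lt_coe]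
      show (0:ℝ) < δ / 2
      positivity
    set w : ℝ≥0 := s + δ' with hwdef
    have hsw : s < w := lt_add_of_pos_right s hδ'pos
    have hdist : dist w s < δ := by
      rw [NNReal.dist_eq]
      have : ((w : ℝ≥0) : ℝ) = (s : ℝ) + δ / 2 := by
        rw [hwdef]; push_cast; rfl
      rw [this]
      rw [abs_of_nonneg (by linarith)]
      linarith
    have hclose := hball hdist
    have hDw : (∑ f ∈ F, D' f w) < (∑ f ∈ F, D' f s) + ε := by
      have := abs_lt.mp hclose
      linarith [this.1, this.2]
    have hBw := hB (A', D') hq w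
    simp only at hBw
    have hA'w : (∑ f ∈ F, c f) ≤ ∑ f ∈ F, A' f w := by
      refine Finset.sum_le_sum ?_
      intro f hf
      rw [hA'gt f hf w hsw]
      have : (0:ℝ) ≤ r f * ((w - s : ℝ≥0) : ℝ) :=
        mul_nonneg (hr f) (NNReal.coe_nonneg _)
      linarith
    have hDs' : (∑ f ∈ F, D' f s) = ∑ f ∈ F, p.2 f s := by
      refine Finset.sum_congr rfl ?_
      intro f hf
      exact (hDs f hf).symm
    linarith
  -- final combination
  have hts : t - s ≠ 0 := fun h =>
    absurd (tsub_eq_zero_iff_le.mp h) (not_le.mpr hlt)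
  rw [tokenBucket, if_neg hts]
  have hstep : ∀ f ∈ F, p.1 f t ≤ c f + r f * ((t - s : ℝ≥0) : ℝ) := by
    intro f hf
    have : p.1 f t - r f * ((t - s : ℝ≥0) : ℝ) ≤ c f := by
      refine le_csInf (hne f) ?_
      rintro x ⟨v, hv, rfl⟩
      have h1 := hAconstr f hf v t (le_trans hv hst)
      have h2 := htb_le f (t - v)
      have hsp : ((s - v : ℝ≥0) : ℝ) + ((t - s : ℝ≥0) : ℝ) = ((t - v : ℝ≥0) : ℝ) :=
        hsplit v s t hv hst
      simp only [hgdef]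
      have : r f * ((t - v : ℝ≥0) : ℝ) = r f * ((s - v : ℝ≥0) : ℝ) + r f * ((t - s : ℝ≥0) : ℝ) := by
        rw [← hsp, mul_add]
      linarith
    linarith
  have hsum : (∑ f ∈ F, p.2 f t) ≤ (∑ f ∈ F, c f) + (∑ f ∈ F, r f) * ((t - s : ℝ≥0) : ℝ) := by
    calc (∑ f ∈ F, p.2 f t) ≤ ∑ f ∈ F, p.1 f t :=
          Finset.sum_le_sum fun f hf => hDleA p hp f hf t
      _ ≤ ∑ f ∈ F, (c f + r f * ((t - s : ℝ≥0) : ℝ)) :=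
          Finset.sum_le_sum fun f hf => hstep f hf
      _ = (∑ f ∈ F, c f) + (∑ f ∈ F, r f) * ((t - s : ℝ≥0) : ℝ) := by
          rw [Finset.sum_add_distrib, Finset.sum_mul]
  linarith
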